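/- Let M₁ and M₂ be weighted binary matroids with E(M₁) ∩ E(M₂) = {p}, where p is not a loop of either, with nonnegative weights γ₁, γ₂. Then the multivariate Tutte polynomial at q = 2 of the delta-sum satisfies Z̃(M₁ △ M₂; γ) = (Z̃(M₁\p; γ₁), Z̃(M₁/p; γ₁)) · [[2,−1],[−1,1]] · (Z̃(M₂\p; γ₂), Z̃(M₂/p; γ₂))ᵀ, where γ is the weighting on E(M₁ △ M₂) inherited from γ₁ and γ₂. -/

import Mathlib

open Finset

/-- Vectors in GF(2)^α vanishing outside A. -/
noncomputable def supportedOn {α : Type*} [Fintype α] [DecidableEq α] (A : Finset α) :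
    Submodule (ZMod 2) (α → ZMod 2) :=
  Submodule.pi (↑(Aᶜ)) fun _ => ⊥

/-- Rank function of the binary matroid with cycle space 𝒞. -/
noncomputable def rk {α : Type*} [Fintype α] [DecidableEq α]
    (𝒞 : Submodule (ZMod 2) (α → ZMod 2)) (A : Finset α) : ℤ :=
  (A.card : ℤ) - Module.finrank (ZMod 2) ↥(𝒞 ⊓ supportedOn A)

/-- The multivariate Tutte polynomial at q = 2 of the binary matroid with cycle space 𝒞
and ground set E. -/
noncomputable def Zt {α : Type*} [Fintype α] [DecidableEq α]
    (𝒞 : Submodule (ZMod 2) (α → ZMod 2)) (γ : α → ℝ) (E : Finset α) : ℝ :=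
  ∑ A ∈ E.powerset, (∏ e ∈ A, γ e) * (2 : ℝ) ^ (-rk 𝒞 A)



lemma mem_supportedOn {α : Type*} [Fintype α] [DecidableEq α] (A : Finset α)
    (x : α → ZMod 2) : x ∈ supportedOn A ↔ ∀ i ∉ A, x i = 0 := by
  simp [supportedOn, Submodule.mem_pi]

open scoped Classical in
lemma finrank_ker_eval {α : Type*} [Fintype α] [DecidableEq α]
    (W : Submodule (ZMod 2) (α → ZMod 2)) (p : α) :
    Module.finrank (ZMod 2) ↥W =
      Module.finrank (ZMod 2) ↥(W ⊓ LinearMap.ker (LinearMap.proj p)) +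
      (if ∃ x ∈ W, x p = 1 then 1 else 0) := by
  classical
  set φ : ↥W →ₗ[ZMod 2] ZMod 2 := (LinearMap.proj p).comp W.subtype with hφ
  have hker : LinearMap.ker φ = Submodule.comap W.subtype (W ⊓ LinearMap.ker (LinearMap.proj p)) := by
    ext x
    simp [φ, x.2]
  have h1 := LinearMap.finrank_range_add_finrank_ker φ
  have h2 : Module.finrank (ZMod 2) ↥(LinearMap.ker φ)
      = Module.finrank (ZMod 2) ↥(W ⊓ LinearMap.ker (LinearMap.proj p)) := by
    rw [hker]
    exact (Submodule.comapSubtypeEquivOfLe inf_le_left).finrank_eq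
  have h3 : Module.finrank (ZMod 2) ↥(LinearMap.range φ)
      = if ∃ x ∈ W, x p = 1 then 1 else 0 := by
    split_ifs with h
    · obtain ⟨x, hx, hxp⟩ := h
      have : LinearMap.range φ = ⊤ := by
        rw [eq_top_iff]
        intro c _
        have : c • (1 : ZMod 2) ∈ LinearMap.range φ := Submodule.smul_mem _ c ⟨⟨x, hx⟩, hxp⟩
        simpa using this
      rw [this, finrank_top, Module.finrank_self]
    · have : LinearMap.range φ = ⊥ := by
        rw [eq_bot_iff]
        rintro c hc
        obtain ⟨⟨x, hx⟩, rfl⟩ := hc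
        have hx1 : x p ≠ 1 := fun h1 => h ⟨x, hx, h1⟩
        have h2 : ∀ a : ZMod 2, a ≠ 1 → a = 0 := by decide
        exact (Submodule.mem_bot _).mpr (h2 _ hx1)
      rw [this, finrank_bot]
  rw [← h3, ← h2, Nat.add_comm]
  exact h1.symm

lemma inf_ker_eq {α : Type*} [Fintype α] [DecidableEq α]
    (𝒞 : Submodule (ZMod 2) (α → ZMod 2)) (A : Finset α) (p : α) (hp : p ∉ A) :
    (𝒞 ⊓ supportedOn (insert p A)) ⊓ LinearMap.ker (LinearMap.proj p)
      = 𝒞 ⊓ supportedOn A := by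
  ext x
  simp only [Submodule.mem_inf, mem_supportedOn, LinearMap.mem_ker, LinearMap.proj_apply]
  constructor
  · rintro ⟨⟨hC, hs⟩, hxp⟩
    refine ⟨hC, fun i hi => ?_⟩
    by_cases h : i = p
    · subst h; exact hxp
    · exact hs i (by simp [h, hi])
  · rintro ⟨hC, hs⟩
    exact ⟨⟨hC, fun i hi => hs i (fun h => hi (Finset.mem_insert_of_mem h))⟩, hs p hp⟩

open scoped Classical in
/-- dim of (𝒞 ⊓ supp (insert p A)) in terms of deletion dim plus epsilon. -/
lemma finrank_insert_eq {α : Type*} [Fintype α] [DecidableEq α]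
    (𝒞 : Submodule (ZMod 2) (α → ZMod 2)) (A : Finset α) (p : α) (hp : p ∉ A) :
    Module.finrank (ZMod 2) ↥(𝒞 ⊓ supportedOn (insert p A)) =
      Module.finrank (ZMod 2) ↥(𝒞 ⊓ supportedOn A) +
      (if ∃ x ∈ 𝒞 ⊓ supportedOn (insert p A), x p = 1 then 1 else 0) := by
  rw [finrank_ker_eval (𝒞 ⊓ supportedOn (insert p A)) p, inf_ker_eq 𝒞 A p hp]

set_option maxHeartbeats 1000000

open scoped Classical in
lemma finrank_union_eq {α : Type*} [Fintype α] [DecidableEq α]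
    (p : α) (𝒞₁ 𝒞₂ : Submodule (ZMod 2) (α → ZMod 2))
    (E₁ E₂ : Finset α) (hdisj : Disjoint E₁ E₂) (hp₁ : p ∉ E₁) (hp₂ : p ∉ E₂)
    (hsupp₁ : ∀ x ∈ 𝒞₁, ∀ i, i ∉ insert p E₁ → x i = 0)
    (hsupp₂ : ∀ x ∈ 𝒞₂, ∀ i, i ∉ insert p E₂ → x i = 0)
    (hloop₁ : (fun i => if i = p then (1 : ZMod 2) else 0) ∉ 𝒞₁)
    (A₁ A₂ : Finset α) (h₁ : A₁ ⊆ E₁) (h₂ : A₂ ⊆ E₂) :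
    Module.finrank (ZMod 2) ↥((𝒞₁ ⊔ 𝒞₂) ⊓ supportedOn (A₁ ∪ A₂)) +
      (if (∃ x ∈ 𝒞₁ ⊓ supportedOn (insert p A₁), x p = 1) ∨
          (∃ x ∈ 𝒞₂ ⊓ supportedOn (insert p A₂), x p = 1) then 1 else 0)
      = Module.finrank (ZMod 2) ↥(𝒞₁ ⊓ supportedOn (insert p A₁)) +
        Module.finrank (ZMod 2) ↥(𝒞₂ ⊓ supportedOn (insert p A₂)) := by
  classical
  have hadd : ∀ a b : ZMod 2, a + b = 0 ↔ a = b := by decide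
  set W₁ := 𝒞₁ ⊓ supportedOn (insert p A₁) with hW₁
  set W₂ := 𝒞₂ ⊓ supportedOn (insert p A₂) with hW₂
  set ψ : (↥W₁ × ↥W₂) →ₗ[ZMod 2] ZMod 2 :=
    ((LinearMap.proj p).comp (W₁.subtype.comp (LinearMap.fst (ZMod 2) ↥W₁ ↥W₂))) +
    ((LinearMap.proj p).comp (W₂.subtype.comp (LinearMap.snd (ZMod 2) ↥W₁ ↥W₂))) with hψ
  have hψapp : ∀ z : ↥W₁ × ↥W₂, ψ z = (z.1 : α → ZMod 2) p + (z.2 : α → ZMod 2) p := by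
    intro z; rfl
  -- rank-nullity on the product
  have h1 := LinearMap.finrank_range_add_finrank_ker ψ
  rw [Module.finrank_prod] at h1
  -- range of ψ
  have h3 : Module.finrank (ZMod 2) ↥(LinearMap.range ψ)
      = (if (∃ x ∈ W₁, x p = 1) ∨ (∃ x ∈ W₂, x p = 1) then 1 else 0) := by
    split_ifs with h
    · have hex : ∃ z : ↥W₁ × ↥W₂, ψ z = 1 := by
        rcases h with ⟨x, hx, hxp⟩ | ⟨x, hx, hxp⟩
        · exact ⟨(⟨x, hx⟩, 0), by simp [hψapp, hxp]⟩
        · exact ⟨(0, ⟨x, hx⟩), by simp [hψapp, hxp]⟩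
      obtain ⟨z, hz⟩ := hex
      have : LinearMap.range ψ = ⊤ :=
        LinearMap.range_eq_top.mpr fun c => ⟨c • z, by rw [map_smul, hz, smul_eq_mul, mul_one]⟩
      rw [this, finrank_top, Module.finrank_self]
    · have : LinearMap.range ψ = ⊥ := by
        rw [eq_bot_iff]
        rintro c hc
        obtain ⟨z, rfl⟩ := hc
        push_neg at h
        have hz1 : (z.1 : α → ZMod 2) p ≠ 1 := h.1 (z.1 : α → ZMod 2) z.1.2
        have hz2 : (z.2 : α → ZMod 2) p ≠ 1 := h.2 (z.2 : α → ZMod 2) z.2.2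
        have h0 : ∀ a : ZMod 2, a ≠ 1 → a = 0 := by decide
        rw [Submodule.mem_bot, hψapp, h0 _ hz1, h0 _ hz2, add_zero]
      rw [this, finrank_bot]
  -- the equiv between ker ψ and the delta-sum space
  set T := (𝒞₁ ⊔ 𝒞₂) ⊓ supportedOn (A₁ ∪ A₂) with hT
  set g : (↥W₁ × ↥W₂) →ₗ[ZMod 2] (α → ZMod 2) :=
    (W₁.subtype.comp (LinearMap.fst (ZMod 2) ↥W₁ ↥W₂)) +
    (W₂.subtype.comp (LinearMap.snd (ZMod 2) ↥W₁ ↥W₂)) with hg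
  have hgapp : ∀ z : ↥W₁ × ↥W₂, g z = (z.1 : α → ZMod 2) + (z.2 : α → ZMod 2) := by
    intro z; rfl
  have hmem : ∀ z : ↥(LinearMap.ker ψ), g (z : ↥W₁ × ↥W₂) ∈ T := by
    rintro ⟨z, hz⟩
    rw [LinearMap.mem_ker, hψapp] at hz
    rw [hgapp]
    refine Submodule.mem_inf.mpr
      ⟨Submodule.mem_sup.mpr ⟨(z.1 : α → ZMod 2), z.1.2.1, (z.2 : α → ZMod 2), z.2.2.1, rfl⟩,
      (mem_supportedOn _ _).mpr fun i hi => ?_⟩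
    simp only [Finset.mem_union, not_or] at hi
    by_cases hip : i = p
    · subst hip; simpa using hz
    · have e1 : (z.1 : α → ZMod 2) i = 0 :=
        (mem_supportedOn _ _).mp z.1.2.2 i (by simp [hip, hi.1])
      have e2 : (z.2 : α → ZMod 2) i = 0 :=
        (mem_supportedOn _ _).mp z.2.2.2 i (by simp [hip, hi.2])
      simp [e1, e2]
  set f : ↥(LinearMap.ker ψ) →ₗ[ZMod 2] ↥T :=
    (g.comp (LinearMap.ker ψ).subtype).codRestrict T hmem with hf
  have hfapp : ∀ z : ↥(LinearMap.ker ψ),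
      (f z : α → ZMod 2) = ((z : ↥W₁ × ↥W₂).1 : α → ZMod 2) + ((z : ↥W₁ × ↥W₂).2 : α → ZMod 2) := by
    intro z
    rw [hf]
    exact hgapp _
  have hinj : Function.Injective f := by
    rw [← LinearMap.ker_eq_bot, eq_bot_iff]
    rintro ⟨z, hz⟩ hz0
    rw [LinearMap.mem_ker] at hz0
    have h0 : ((z.1 : α → ZMod 2) + (z.2 : α → ZMod 2)) = 0 := by
      have := congrArg (Subtype.val) hz0
      rwa [hfapp] at this
    have heq : (z.2 : α → ZMod 2) = (z.1 : α → ZMod 2) := by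
      funext i
      exact ((hadd _ _).mp (congrFun h0 i)).symm
    -- z.1 vanishes away from p
    have hvan : ∀ i, i ≠ p → (z.1 : α → ZMod 2) i = 0 := by
      intro i hip
      by_cases hiA : i ∈ A₁
      · have : i ∉ insert p A₂ := by
          simp only [Finset.mem_insert, not_or]
          exact ⟨hip, fun hh => (Finset.disjoint_left.mp hdisj (h₁ hiA)) (h₂ hh)⟩
        have := (mem_supportedOn _ _).mp z.2.2.2 i this
        rw [heq] at this; exact this
      · exact (mem_supportedOn _ _).mp z.1.2.2 i (by simp [hip, hiA])
    have hz1 : (z.1 : α → ZMod 2) = 0 := by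
      by_cases hp0 : (z.1 : α → ZMod 2) p = 0
      · funext i
        by_cases hip : i = p
        · subst hip; exact hp0
        · exact hvan i hip
      · exfalso
        have hp1 : (z.1 : α → ZMod 2) p = 1 := by
          have : ∀ a : ZMod 2, a ≠ 0 → a = 1 := by decide
          exact this _ hp0
        apply hloop₁
        have : (z.1 : α → ZMod 2) = (fun i => if i = p then (1 : ZMod 2) else 0) := by
          funext i
          by_cases hip : i = p
          · subst hip; simp [hp1]
          · simp [hip, hvan i hip]
        rw [← this]; exact z.1.2.1
    have hz2 : (z.2 : α → ZMod 2) = 0 := by rw [heq, hz1]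
    rw [Submodule.mem_bot]
    apply Subtype.ext
    apply Prod.ext <;> apply Subtype.ext
    · exact hz1
    · exact hz2
  have hsurj : Function.Surjective f := by
    rintro ⟨v, hv⟩
    obtain ⟨hv1, hv2⟩ := hv
    replace hv2 : ∀ i ∉ A₁ ∪ A₂, v i = 0 := (mem_supportedOn _ _).mp hv2
    obtain ⟨c₁, hc₁, c₂, hc₂, rfl⟩ := Submodule.mem_sup.mp hv1
    have hs1 : c₁ ∈ supportedOn (insert p A₁) := by
      rw [mem_supportedOn]
      intro i hi
      simp only [Finset.mem_insert, not_or] at hi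
      by_cases hiE : i ∈ E₁
      · have hc2i : c₂ i = 0 := hsupp₂ c₂ hc₂ i (by
          simp only [Finset.mem_insert, not_or]
          exact ⟨hi.1, Finset.disjoint_left.mp hdisj hiE⟩)
        have hvi : c₁ i + c₂ i = 0 := hv2 i (by
          simp only [Finset.mem_union, not_or]
          exact ⟨hi.2, fun hh => (Finset.disjoint_left.mp hdisj hiE) (h₂ hh)⟩)
        rw [hc2i, add_zero] at hvi; exact hvi
      · exact hsupp₁ c₁ hc₁ i (by simp [hi.1, hiE])
    have hs2 : c₂ ∈ supportedOn (insert p A₂) := by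
      rw [mem_supportedOn]
      intro i hi
      simp only [Finset.mem_insert, not_or] at hi
      by_cases hiE : i ∈ E₂
      · have hc1i : c₁ i = 0 := hsupp₁ c₁ hc₁ i (by
          simp only [Finset.mem_insert, not_or]
          exact ⟨hi.1, Finset.disjoint_right.mp hdisj hiE⟩)
        have hvi : c₁ i + c₂ i = 0 := hv2 i (by
          simp only [Finset.mem_union, not_or]
          exact ⟨fun hh => (Finset.disjoint_right.mp hdisj hiE) (h₁ hh), hi.2⟩)
        rw [hc1i, zero_add] at hvi; exact hvi
      · exact hsupp₂ c₂ hc₂ i (by simp [hi.1, hiE])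
    have hker : c₁ p + c₂ p = 0 := hv2 p (by
      simp only [Finset.mem_union, not_or]
      exact ⟨fun hh => hp₁ (h₁ hh), fun hh => hp₂ (h₂ hh)⟩)
    refine ⟨⟨(⟨c₁, hc₁, hs1⟩, ⟨c₂, hc₂, hs2⟩), ?_⟩, ?_⟩
    · rw [LinearMap.mem_ker, hψapp]; exact hker
    · apply Subtype.ext; rw [hfapp]
  -- put it together
  have hequiv : Module.finrank (ZMod 2) ↥(LinearMap.ker ψ) = Module.finrank (ZMod 2) ↥T :=
    (LinearEquiv.ofBijective f ⟨hinj, hsurj⟩).finrank_eq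
  rw [← hequiv, ← h3, Nat.add_comm]
  exact h1

lemma sum_powerset_union' {α : Type*} [DecidableEq α] (E₁ E₂ : Finset α) (h : Disjoint E₁ E₂)
    (f : Finset α → ℝ) :
    ∑ A ∈ (E₁ ∪ E₂).powerset, f A =
      ∑ A₁ ∈ E₁.powerset, ∑ A₂ ∈ E₂.powerset, f (A₁ ∪ A₂) := by
  rw [← Finset.sum_product']
  refine Finset.sum_nbij' (fun A => (A ∩ E₁, A ∩ E₂)) (fun P => P.1 ∪ P.2) ?_ ?_ ?_ ?_ ?_
  · intro A hA
    simp [Finset.mem_product, Finset.inter_subset_right]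
  · rintro ⟨P₁, P₂⟩ hP
    simp only [Finset.mem_product, Finset.mem_powerset] at hP
    exact Finset.mem_powerset.mpr (Finset.union_subset_union hP.1 hP.2)
  · intro A hA
    rw [Finset.mem_powerset] at hA
    show A ∩ E₁ ∪ A ∩ E₂ = A
    rw [← Finset.inter_union_distrib_left, Finset.inter_eq_left.mpr hA]
  · rintro ⟨P₁, P₂⟩ hP
    simp only [Finset.mem_product, Finset.mem_powerset] at hP
    have h1 : (P₁ ∪ P₂) ∩ E₁ = P₁ := by
      ext x
      simp only [Finset.mem_inter, Finset.mem_union]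
      constructor
      · rintro ⟨hx | hx, hE⟩
        · exact hx
        · exact absurd hE (Finset.disjoint_right.mp h (hP.2 hx))
      · intro hx; exact ⟨Or.inl hx, hP.1 hx⟩
    have h2 : (P₁ ∪ P₂) ∩ E₂ = P₂ := by
      ext x
      simp only [Finset.mem_inter, Finset.mem_union]
      constructor
      · rintro ⟨hx | hx, hE⟩
        · exact absurd hE (Finset.disjoint_left.mp h (hP.1 hx))
        · exact hx
      · intro hx; exact ⟨Or.inr hx, hP.2 hx⟩
    show ((P₁ ∪ P₂) ∩ E₁, (P₁ ∪ P₂) ∩ E₂) = (P₁, P₂)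
    rw [h1, h2]
  · intro A hA
    rw [Finset.mem_powerset] at hA
    show f A = f (A ∩ E₁ ∪ A ∩ E₂)
    rw [← Finset.inter_union_distrib_left, Finset.inter_eq_left.mpr hA]

lemma double_sum_expand {β γ : Type*} (s : Finset β) (t : Finset γ) (a a' : β → ℝ) (b b' : γ → ℝ) :
    ∑ i ∈ s, ∑ j ∈ t, (2 * (a i * b j) - a i * b' j - a' i * b j + a' i * b' j)
      = 2 * (∑ i ∈ s, a i) * (∑ j ∈ t, b j) - (∑ i ∈ s, a i) * (∑ j ∈ t, b' j)
        - (∑ i ∈ s, a' i) * (∑ j ∈ t, b j) + (∑ i ∈ s, a' i) * (∑ j ∈ t, b' j) := by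
  rw [mul_assoc, Finset.sum_mul_sum s t a b, Finset.sum_mul_sum s t a b',
    Finset.sum_mul_sum s t a' b, Finset.sum_mul_sum s t a' b', Finset.mul_sum,
    ← Finset.sum_sub_distrib, ← Finset.sum_sub_distrib, ← Finset.sum_add_distrib]
  refine Finset.sum_congr rfl fun i _ => ?_
  rw [Finset.mul_sum, ← Finset.sum_sub_distrib, ← Finset.sum_sub_distrib,
    ← Finset.sum_add_distrib]

lemma supportedOn_mono {α : Type*} [Fintype α] [DecidableEq α] {A B : Finset α}
    (h : A ⊆ B) : supportedOn A ≤ supportedOn B := by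
  intro x hx
  rw [mem_supportedOn] at hx ⊢
  exact fun i hi => hx i (fun hh => hi (h hh))

/-- 2-sum splitting formula at q = 2.  M₁, M₂ are weighted binary matroids, given by
cycle spaces 𝒞₁, 𝒞₂ with ground sets E₁ ∪ {p} and E₂ ∪ {p}, sharing only the non-loop
element p, with nonnegative weights.  The delta-sum M₁ △ M₂ is the binary matroid on
E₁ ∪ E₂ whose cycle space is {C₁ ⊕ C₂ : Cᵢ ∈ 𝒞ᵢ} (i.e. (𝒞₁ ⊔ 𝒞₂) ∩ {vanish on p}),
weighted by γ inherited from γ₁, γ₂.  Then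
Z̃(M₁ △ M₂;γ) = (Z̃(M₁\p), Z̃(M₁/p)) [[2,−1],[−1,1]] (Z̃(M₂\p), Z̃(M₂/p))ᵀ,
where Z̃(Mᵢ\p;γᵢ) = Σ_{A ⊆ Eᵢ} γ_A 2^{−rᵢ(A)} and
Z̃(Mᵢ/p;γᵢ) = Σ_{A ⊆ Eᵢ} γ_A 2^{−(rᵢ(A ∪ {p}) − 1)}. -/
theorem stmt_5 {α : Type*} [Fintype α] [DecidableEq α]
    (E₁ E₂ : Finset α) (p : α)
    (hdisj : Disjoint E₁ E₂) (hp₁ : p ∉ E₁) (hp₂ : p ∉ E₂)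
    (𝒞₁ 𝒞₂ : Submodule (ZMod 2) (α → ZMod 2))
    (hsupp₁ : ∀ x ∈ 𝒞₁, ∀ i, i ∉ insert p E₁ → x i = 0)
    (hsupp₂ : ∀ x ∈ 𝒞₂, ∀ i, i ∉ insert p E₂ → x i = 0)
    (hloop₁ : (fun i => if i = p then (1 : ZMod 2) else 0) ∉ 𝒞₁)
    (hloop₂ : (fun i => if i = p then (1 : ZMod 2) else 0) ∉ 𝒞₂)
    (γ₁ γ₂ : α → ℝ) (hγ₁ : ∀ e, 0 ≤ γ₁ e) (hγ₂ : ∀ e, 0 ≤ γ₂ e)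
    (γ : α → ℝ) (hγ : ∀ e ∈ E₁, γ e = γ₁ e) (hγ' : ∀ e ∈ E₂, γ e = γ₂ e) :
    Zt ((𝒞₁ ⊔ 𝒞₂) ⊓ supportedOn (E₁ ∪ E₂)) γ (E₁ ∪ E₂) =
      2 * Zt 𝒞₁ γ₁ E₁ * Zt 𝒞₂ γ₂ E₂
      - Zt 𝒞₁ γ₁ E₁ *
          (∑ A ∈ E₂.powerset, (∏ e ∈ A, γ₂ e) * (2 : ℝ) ^ (-(rk 𝒞₂ (insert p A) - 1)))
      - (∑ A ∈ E₁.powerset, (∏ e ∈ A, γ₁ e) * (2 : ℝ) ^ (-(rk 𝒞₁ (insert p A) - 1))) *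
          Zt 𝒞₂ γ₂ E₂
      + (∑ A ∈ E₁.powerset, (∏ e ∈ A, γ₁ e) * (2 : ℝ) ^ (-(rk 𝒞₁ (insert p A) - 1))) *
          (∑ A ∈ E₂.powerset, (∏ e ∈ A, γ₂ e) * (2 : ℝ) ^ (-(rk 𝒞₂ (insert p A) - 1))) := by

  classical
  have h2ne : (2 : ℝ) ≠ 0 := two_ne_zero
  have hpair : ∀ A₁ ∈ E₁.powerset, ∀ A₂ ∈ E₂.powerset,
      (2:ℝ) ^ (-rk ((𝒞₁ ⊔ 𝒞₂) ⊓ supportedOn (E₁ ∪ E₂)) (A₁ ∪ A₂)) =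
        2 * ((2:ℝ) ^ (-rk 𝒞₁ A₁) * (2:ℝ) ^ (-rk 𝒞₂ A₂))
        - (2:ℝ) ^ (-rk 𝒞₁ A₁) * (2:ℝ) ^ (-(rk 𝒞₂ (insert p A₂) - 1))
        - (2:ℝ) ^ (-(rk 𝒞₁ (insert p A₁) - 1)) * (2:ℝ) ^ (-rk 𝒞₂ A₂)
        + (2:ℝ) ^ (-(rk 𝒞₁ (insert p A₁) - 1)) * (2:ℝ) ^ (-(rk 𝒞₂ (insert p A₂) - 1)) := by
    intro A₁ hA₁ A₂ hA₂
    rw [Finset.mem_powerset] at hA₁ hA₂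
    have hpA₁ : p ∉ A₁ := fun h => hp₁ (hA₁ h)
    have hpA₂ : p ∉ A₂ := fun h => hp₂ (hA₂ h)
    have hdisjA : Disjoint A₁ A₂ := hdisj.mono hA₁ hA₂
    have hsub : ((𝒞₁ ⊔ 𝒞₂) ⊓ supportedOn (E₁ ∪ E₂)) ⊓ supportedOn (A₁ ∪ A₂)
        = (𝒞₁ ⊔ 𝒞₂) ⊓ supportedOn (A₁ ∪ A₂) := by
      rw [inf_assoc,
        inf_eq_right.mpr (supportedOn_mono (Finset.union_subset_union hA₁ hA₂))]
    have h1 := finrank_insert_eq 𝒞₁ A₁ p hpA₁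
    have h2 := finrank_insert_eq 𝒞₂ A₂ p hpA₂
    have hU := finrank_union_eq p 𝒞₁ 𝒞₂ E₁ E₂ hdisj hp₁ hp₂ hsupp₁ hsupp₂ hloop₁ A₁ A₂ hA₁ hA₂
    have hrkD : rk ((𝒞₁ ⊔ 𝒞₂) ⊓ supportedOn (E₁ ∪ E₂)) (A₁ ∪ A₂)
        = ((A₁.card : ℤ) + A₂.card)
          - Module.finrank (ZMod 2) ↥((𝒞₁ ⊔ 𝒞₂) ⊓ supportedOn (A₁ ∪ A₂)) := by
      rw [rk, hsub, Finset.card_union_of_disjoint hdisjA]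
      push_cast; ring
    have hrki1 : rk 𝒞₁ (insert p A₁)
        = (A₁.card : ℤ) + 1 - Module.finrank (ZMod 2) ↥(𝒞₁ ⊓ supportedOn (insert p A₁)) := by
      rw [rk, Finset.card_insert_of_notMem hpA₁]; push_cast; ring
    have hrki2 : rk 𝒞₂ (insert p A₂)
        = (A₂.card : ℤ) + 1 - Module.finrank (ZMod 2) ↥(𝒞₂ ⊓ supportedOn (insert p A₂)) := by
      rw [rk, Finset.card_insert_of_notMem hpA₂]; push_cast; ring
    have hrk1 : rk 𝒞₁ A₁
        = (A₁.card : ℤ) - Module.finrank (ZMod 2) ↥(𝒞₁ ⊓ supportedOn A₁) := rfl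
    have hrk2 : rk 𝒞₂ A₂
        = (A₂.card : ℤ) - Module.finrank (ZMod 2) ↥(𝒞₂ ⊓ supportedOn A₂) := rfl
    by_cases hP₁ : (∃ x ∈ 𝒞₁ ⊓ supportedOn (insert p A₁), x p = 1) <;>
      by_cases hP₂ : (∃ x ∈ 𝒞₂ ⊓ supportedOn (insert p A₂), x p = 1)
    · rw [if_pos hP₁] at h1
      rw [if_pos hP₂] at h2
      rw [if_pos (Or.inl hP₁)] at hU
      have E1 : -(rk 𝒞₁ (insert p A₁) - 1) = -rk 𝒞₁ A₁ + 1 := by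
        rw [hrki1, hrk1]; omega
      have E2 : -(rk 𝒞₂ (insert p A₂) - 1) = -rk 𝒞₂ A₂ + 1 := by
        rw [hrki2, hrk2]; omega
      have E3 : -rk ((𝒞₁ ⊔ 𝒞₂) ⊓ supportedOn (E₁ ∪ E₂)) (A₁ ∪ A₂)
          = -rk 𝒞₁ A₁ + -rk 𝒞₂ A₂ + 1 := by
        rw [hrkD, hrk1, hrk2]; omega
      rw [E1, E2, E3]
      simp only [zpow_add₀ h2ne, zpow_one]
      ring
    · rw [if_pos hP₁] at h1
      rw [if_neg hP₂] at h2
      rw [if_pos (Or.inl hP₁)] at hU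
      have E1 : -(rk 𝒞₁ (insert p A₁) - 1) = -rk 𝒞₁ A₁ + 1 := by
        rw [hrki1, hrk1]; omega
      have E2 : -(rk 𝒞₂ (insert p A₂) - 1) = -rk 𝒞₂ A₂ := by
        rw [hrki2, hrk2]; omega
      have E3 : -rk ((𝒞₁ ⊔ 𝒞₂) ⊓ supportedOn (E₁ ∪ E₂)) (A₁ ∪ A₂)
          = -rk 𝒞₁ A₁ + -rk 𝒞₂ A₂ := by
        rw [hrkD, hrk1, hrk2]; omega
      rw [E1, E2, E3]
      simp only [zpow_add₀ h2ne, zpow_one]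
      ring
    · rw [if_neg hP₁] at h1
      rw [if_pos hP₂] at h2
      rw [if_pos (Or.inr hP₂)] at hU
      have E1 : -(rk 𝒞₁ (insert p A₁) - 1) = -rk 𝒞₁ A₁ := by
        rw [hrki1, hrk1]; omega
      have E2 : -(rk 𝒞₂ (insert p A₂) - 1) = -rk 𝒞₂ A₂ + 1 := by
        rw [hrki2, hrk2]; omega
      have E3 : -rk ((𝒞₁ ⊔ 𝒞₂) ⊓ supportedOn (E₁ ∪ E₂)) (A₁ ∪ A₂)
          = -rk 𝒞₁ A₁ + -rk 𝒞₂ A₂ := by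
        rw [hrkD, hrk1, hrk2]; omega
      rw [E1, E2, E3]
      simp only [zpow_add₀ h2ne, zpow_one]
      ring
    · rw [if_neg hP₁] at h1
      rw [if_neg hP₂] at h2
      rw [if_neg (not_or.mpr ⟨hP₁, hP₂⟩)] at hU
      have E1 : -(rk 𝒞₁ (insert p A₁) - 1) = -rk 𝒞₁ A₁ := by
        rw [hrki1, hrk1]; omega
      have E2 : -(rk 𝒞₂ (insert p A₂) - 1) = -rk 𝒞₂ A₂ := by
        rw [hrki2, hrk2]; omega
      have E3 : -rk ((𝒞₁ ⊔ 𝒞₂) ⊓ supportedOn (E₁ ∪ E₂)) (A₁ ∪ A₂)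
          = -rk 𝒞₁ A₁ + -rk 𝒞₂ A₂ := by
        rw [hrkD, hrk1, hrk2]; omega
      rw [E1, E2, E3]
      simp only [zpow_add₀ h2ne, zpow_one]
      ring
  have lhs_eq : Zt ((𝒞₁ ⊔ 𝒞₂) ⊓ supportedOn (E₁ ∪ E₂)) γ (E₁ ∪ E₂)
      = ∑ A₁ ∈ E₁.powerset, ∑ A₂ ∈ E₂.powerset,
          (2 * (((∏ e ∈ A₁, γ₁ e) * (2:ℝ) ^ (-rk 𝒞₁ A₁)) *
                ((∏ e ∈ A₂, γ₂ e) * (2:ℝ) ^ (-rk 𝒞₂ A₂)))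
           - ((∏ e ∈ A₁, γ₁ e) * (2:ℝ) ^ (-rk 𝒞₁ A₁)) *
               ((∏ e ∈ A₂, γ₂ e) * (2:ℝ) ^ (-(rk 𝒞₂ (insert p A₂) - 1)))
           - ((∏ e ∈ A₁, γ₁ e) * (2:ℝ) ^ (-(rk 𝒞₁ (insert p A₁) - 1))) *
               ((∏ e ∈ A₂, γ₂ e) * (2:ℝ) ^ (-rk 𝒞₂ A₂))
           + ((∏ e ∈ A₁, γ₁ e) * (2:ℝ) ^ (-(rk 𝒞₁ (insert p A₁) - 1))) *
               ((∏ e ∈ A₂, γ₂ e) * (2:ℝ) ^ (-(rk 𝒞₂ (insert p A₂) - 1)))) := by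
    rw [Zt, sum_powerset_union' E₁ E₂ hdisj]
    refine Finset.sum_congr rfl fun A₁ hA₁ => Finset.sum_congr rfl fun A₂ hA₂ => ?_
    have hA₁' := Finset.mem_powerset.mp hA₁
    have hA₂' := Finset.mem_powerset.mp hA₂
    have hdisjA : Disjoint A₁ A₂ := hdisj.mono hA₁' hA₂'
    have hw : (∏ e ∈ A₁ ∪ A₂, γ e) = (∏ e ∈ A₁, γ₁ e) * (∏ e ∈ A₂, γ₂ e) := by
      rw [Finset.prod_union hdisjA,
        Finset.prod_congr rfl (fun e he => hγ e (hA₁' he)),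
        Finset.prod_congr rfl (fun e he => hγ' e (hA₂' he))]
    rw [hw, hpair A₁ hA₁ A₂ hA₂]
    ring
  rw [lhs_eq,
    double_sum_expand E₁.powerset E₂.powerset
      (fun A => (∏ e ∈ A, γ₁ e) * (2:ℝ) ^ (-rk 𝒞₁ A))
      (fun A => (∏ e ∈ A, γ₁ e) * (2:ℝ) ^ (-(rk 𝒞₁ (insert p A) - 1)))
      (fun A => (∏ e ∈ A, γ₂ e) * (2:ℝ) ^ (-rk 𝒞₂ A))
      (fun A => (∏ e ∈ A, γ₂ e) * (2:ℝ) ^ (-(rk 𝒞₂ (insert p A) - 1)))]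
  rfl
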